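/- For every d, n, m ≥ 1, the convex hull (over ℝ) of C_{max,d}^s(n,m) is a closed subset of the space of families Fin n → Fin n → Fin m → Fin m → ℝ with the topology of coordinatewise convergence. -/

import Mathlib

open scoped BigOperators

/-- A correlation with `nA` questions for Alice, `nB` questions for Bob and `m` outcomes. -/
def IsCorrelation {nA nB m : ℕ} (p : Fin nA → Fin nB → Fin m → Fin m → ℝ) : Prop :=
  (∀ x y i j, 0 ≤ p x y i j) ∧ ∀ x y, (∑ i, ∑ j, p x y i j) = 1

/-- A projection-valued measure with `m` outcomes on `ℂ^d`. -/
def IsPVM {d m : ℕ} (E : Fin m → Matrix (Fin d) (Fin d) ℂ) : Prop :=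
  (∀ i, (E i).IsHermitian) ∧ (∀ i, E i * E i = E i) ∧ (∑ i, E i = 1)

/-- The set `C_{max,d}(nA,nB,m)` of maximally entangled correlations in dimension `d`. -/
def CmaxD (nA nB m d : ℕ) : Set (Fin nA → Fin nB → Fin m → Fin m → ℝ) :=
  {p | IsCorrelation p ∧
    ∃ (E : Fin nA → Fin m → Matrix (Fin d) (Fin d) ℂ)
      (F : Fin nB → Fin m → Matrix (Fin d) (Fin d) ℂ),
      (∀ x, IsPVM (E x)) ∧ (∀ y, IsPVM (F y)) ∧
      ∀ x y i j, (p x y i j : ℂ) = (1 / (d : ℂ)) * (E x i * F y j).trace}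

/-- The set `C_max(nA,nB,m)` of maximally entangled correlations. -/
def Cmax (nA nB m : ℕ) : Set (Fin nA → Fin nB → Fin m → Fin m → ℝ) :=
  ⋃ (d : ℕ) (_ : 1 ≤ d), CmaxD nA nB m d

/-- A correlation with the same questions for Alice and Bob is synchronous if
`p x x i j = 0` whenever `i ≠ j`. -/
def Synchronous {n m : ℕ} (p : Fin n → Fin n → Fin m → Fin m → ℝ) : Prop :=
  ∀ x i j, i ≠ j → p x x i j = 0

/-- The set `C_max^s(n,m)` of synchronous maximally entangled correlations. -/
def CmaxSync (n m : ℕ) : Set (Fin n → Fin n → Fin m → Fin m → ℝ) :=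
  {p ∈ Cmax n n m | Synchronous p}


lemma sum_dite_embedding {ι : Type*} [Fintype ι] {N : ℕ} (g : ι ↪ Fin N)
    {α : Type*} [AddCommMonoid α] (f : ι → α) :
    (∑ j : Fin N, if h : ∃ i, g i = j then f h.choose else 0) = ∑ i, f i := by
  classical
  have h1 : (∑ j : Fin N, if h : ∃ i, g i = j then f h.choose else 0)
      = ∑ j ∈ Finset.univ.map g, if h : ∃ i, g i = j then f h.choose else 0 := by
    refine (Finset.sum_subset (Finset.subset_univ _) fun j _ hj => ?_).symm
    refine dif_neg fun ⟨i, hi⟩ => hj ?_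
    exact Finset.mem_map.mpr ⟨i, Finset.mem_univ _, hi⟩
  rw [h1, Finset.sum_map]
  refine Finset.sum_congr rfl fun i _ => ?_
  have h : ∃ i', g i' = g i := ⟨i, rfl⟩
  rw [dif_pos h, g.injective h.choose_spec]

lemma isCompact_convexHull_of_isCompact {E : Type*} [NormedAddCommGroup E] [NormedSpace ℝ E]
    [FiniteDimensional ℝ E] {s : Set E} (hs : IsCompact s) :
    IsCompact (convexHull ℝ s) := by
  classical
  rcases s.eq_empty_or_nonempty with rfl | ⟨x₀, hx₀⟩
  · simp only [convexHull_empty]; exact isCompact_empty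
  set N : ℕ := Module.finrank ℝ E + 1 with hN
  set f : (Fin N → ℝ) × (Fin N → E) → E := fun wz => ∑ i, wz.1 i • wz.2 i with hf
  have hfc : Continuous f := by
    refine continuous_finset_sum _ fun i _ => ?_
    exact ((continuous_apply i).comp continuous_fst).smul
      ((continuous_apply i).comp continuous_snd)
  have hK : IsCompact ((stdSimplex ℝ (Fin N)) ×ˢ (Set.univ.pi fun _ : Fin N => s)) :=
    IsCompact.prod (isCompact_stdSimplex (𝕜 := ℝ) (ι := Fin N)) (isCompact_univ_pi fun _ => hs)
  have heq : convexHull ℝ s = f '' ((stdSimplex ℝ (Fin N)) ×ˢ (Set.univ.pi fun _ : Fin N => s)) := by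
    apply Set.Subset.antisymm
    · intro x hx
      obtain ⟨ι, hι, z, w, hzs, hai, hw, hw1, hx⟩ :=
        eq_pos_convex_span_of_mem_convexHull hx
      have hcard : Fintype.card ι ≤ N := by
        refine hai.card_le_finrank_succ.trans ?_
        exact Nat.add_le_add_right (Submodule.finrank_le _) 1
      obtain ⟨g⟩ : Nonempty (ι ↪ Fin N) :=
        Function.Embedding.nonempty_of_card_le (by simpa using hcard)
      set w' : Fin N → ℝ := fun j => if h : ∃ i, g i = j then w h.choose else 0 with hw'
      set z' : Fin N → E := fun j => if h : ∃ i, g i = j then z h.choose else x₀ with hz'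
      refine ⟨(w', z'), ⟨⟨fun j => ?_, ?_⟩, fun j _ => ?_⟩, ?_⟩
      · by_cases h : ∃ i, g i = j
        · simp only [hw', dif_pos h]; exact (hw _).le
        · simp [hw', dif_neg h]
      · simpa [hw'] using (sum_dite_embedding g w).trans hw1
      · by_cases h : ∃ i, g i = j
        · simp only [hz', dif_pos h]; exact hzs ⟨_, rfl⟩
        · simp only [hz', dif_neg h]; exact hx₀
      · show (∑ j, w' j • z' j) = x
        have : ∀ j, w' j • z' j = if h : ∃ i, g i = j then w h.choose • z h.choose else 0 := by
          intro j
          by_cases h : ∃ i, g i = j <;> simp [hw', hz', h]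
        calc (∑ j, w' j • z' j)
            = ∑ j : Fin N, if h : ∃ i, g i = j then w h.choose • z h.choose else 0 :=
              Finset.sum_congr rfl fun j _ => this j
          _ = ∑ i, w i • z i := sum_dite_embedding g fun i => w i • z i
          _ = x := hx
    · rintro x ⟨⟨w, z⟩, ⟨hwmem, hzmem⟩, rfl⟩
      refine (convex_convexHull ℝ s).sum_mem (fun i _ => hwmem.1 i) hwmem.2
        fun i _ => subset_convexHull ℝ s (hzmem i (Set.mem_univ _))
  rw [heq]
  exact hK.image hfc

lemma proj_entry_bound {d : ℕ} {E : Matrix (Fin d) (Fin d) ℂ}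
    (hH : E.IsHermitian) (hI : E * E = E) (a b : Fin d) : ‖E a b‖ ≤ 1 := by
  set t : ℝ := ∑ k, Complex.normSq (E a k) with ht
  have hdiag : E a a = (t : ℂ) := by
    conv_lhs => rw [← hI]
    rw [Matrix.mul_apply, ht]
    push_cast
    refine Finset.sum_congr rfl fun k _ => ?_
    rw [← hH.apply k a]
    exact Complex.mul_conj _
  have htnn : 0 ≤ t := Finset.sum_nonneg fun k _ => Complex.normSq_nonneg _
  have h1 : Complex.normSq (E a a) ≤ t :=
    Finset.single_le_sum (f := fun k => Complex.normSq (E a k))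
      (fun k _ => Complex.normSq_nonneg _) (Finset.mem_univ a)
  have h2 : Complex.normSq (E a a) = t * t := by rw [hdiag, Complex.normSq_ofReal]
  have ht1 : t ≤ 1 := by nlinarith
  have h3 : Complex.normSq (E a b) ≤ t :=
    Finset.single_le_sum (f := fun k => Complex.normSq (E a k))
      (fun k _ => Complex.normSq_nonneg _) (Finset.mem_univ b)
  have h4 : ‖E a b‖ ^ 2 = Complex.normSq (E a b) := by
    rw [Complex.sq_norm]
  nlinarith [norm_nonneg (E a b)]


/-- STATEMENT 8: the convex hull of `C_{max,d}^s(n,m)` is closed. -/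
theorem isClosed_convexHull_CmaxD_sync (d n m : ℕ) (hd : 1 ≤ d) (hn : 1 ≤ n) (hm : 1 ≤ m) :
    IsClosed (convexHull ℝ {p : Fin n → Fin n → Fin m → Fin m → ℝ |
      p ∈ CmaxD n n m d ∧ Synchronous p}) := by
  classical
  set X := Fin n → Fin m → Matrix (Fin d) (Fin d) ℂ with hX
  set T : Set X := {E | ∀ x, IsPVM (E x)} with hT
  -- T is closed
  have hTclosed : IsClosed T := by
    have : T = (⋂ x, ⋂ i, {E : X | (E x i).conjTranspose = E x i}) ∩
        ((⋂ x, ⋂ i, {E : X | E x i * E x i = E x i}) ∩ (⋂ x, {E : X | ∑ i, E x i = 1})) := by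
      ext E
      simp only [hT, Set.mem_setOf_eq, Set.mem_inter_iff, Set.mem_iInter, IsPVM,
        Matrix.IsHermitian, forall_and]
    rw [this]
    have hev : ∀ (x : Fin n) (i : Fin m), Continuous fun E : X => E x i := fun x i =>
      (continuous_apply i).comp (continuous_apply x)
    refine IsClosed.inter ?_ (IsClosed.inter ?_ ?_)
    · exact isClosed_iInter fun x => isClosed_iInter fun i =>
        isClosed_eq ((hev x i).matrix_conjTranspose) (hev x i)
    · exact isClosed_iInter fun x => isClosed_iInter fun i =>
        isClosed_eq ((hev x i).matrix_mul (hev x i)) (hev x i)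
    · exact isClosed_iInter fun x =>
        isClosed_eq (continuous_finset_sum _ fun i _ => hev x i) continuous_const
  -- T is contained in a compact set
  have hTsub : T ⊆ Set.univ.pi fun _ : Fin n => Set.univ.pi fun _ : Fin m =>
      Set.univ.pi fun _ : Fin d => Set.univ.pi fun _ : Fin d => Metric.closedBall (0 : ℂ) 1 := by
    intro E hE
    intro x _
    intro i _
    intro a _
    intro b _
    rw [Metric.mem_closedBall, dist_zero_right]
    exact proj_entry_bound ((hE x).1 i) ((hE x).2.1 i) a b
  have hCc : IsCompact (Set.univ.pi fun _ : Fin n => Set.univ.pi fun _ : Fin m =>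
      Set.univ.pi fun _ : Fin d => Set.univ.pi fun _ : Fin d => Metric.closedBall (0 : ℂ) 1) :=
    isCompact_univ_pi fun _ => isCompact_univ_pi fun _ => isCompact_univ_pi fun _ =>
      isCompact_univ_pi fun _ => isCompact_closedBall _ _
  have hTcpt : IsCompact T := hCc.of_isClosed_subset hTclosed hTsub
  -- the map
  set φ : X × X → (Fin n → Fin n → Fin m → Fin m → ℝ) :=
    fun EF x y i j => ((1 / (d : ℂ)) * ((EF.1 x i * EF.2 y j).trace)).re with hφ
  have hφc : Continuous φ := by
    refine continuous_pi fun x => continuous_pi fun y => continuous_pi fun i =>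
      continuous_pi fun j => Complex.continuous_re.comp ?_
    refine continuous_const.mul (Continuous.matrix_trace ?_)
    exact Continuous.matrix_mul
      (((continuous_apply i).comp ((continuous_apply x).comp continuous_fst)))
      (((continuous_apply j).comp ((continuous_apply y).comp continuous_snd)))
  -- set equality
  have hSeq : {p : Fin n → Fin n → Fin m → Fin m → ℝ | p ∈ CmaxD n n m d ∧ Synchronous p} =
      (φ '' (T ×ˢ T)) ∩ ({p | IsCorrelation p} ∩ {p | Synchronous p}) := by
    ext p
    constructor
    · rintro ⟨⟨hcorr, E, F, hE, hF, heqn⟩, hsync⟩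
      refine ⟨⟨(E, F), Set.mem_prod.mpr ⟨hE, hF⟩, ?_⟩, hcorr, hsync⟩
      funext x y i j
      show ((1 / (d : ℂ)) * ((E x i * F y j).trace)).re = p x y i j
      rw [← heqn x y i j, Complex.ofReal_re]
    · rintro ⟨⟨⟨E, F⟩, hEF, rfl⟩, hcorr, hsync⟩
      obtain ⟨hE, hF⟩ := Set.mem_prod.mp hEF
      refine ⟨⟨hcorr, E, F, hE, hF, fun x y i j => ?_⟩, hsync⟩
      set z : ℂ := (1 / (d : ℂ)) * ((E x i * F y j).trace) with hz
      show ((z.re : ℝ) : ℂ) = z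
      have htr : (starRingEnd ℂ) z = z := by
        have h1 : (starRingEnd ℂ) ((E x i * F y j).trace) = (E x i * F y j).trace :=
          calc (starRingEnd ℂ) ((E x i * F y j).trace)
              = star ((E x i * F y j).trace) := rfl
            _ = ((E x i * F y j).conjTranspose).trace :=
                (Matrix.trace_conjTranspose (E x i * F y j)).symm
            _ = (F y j * E x i).trace := by
                rw [Matrix.conjTranspose_mul, (hF y).1 j, (hE x).1 i]
            _ = (E x i * F y j).trace := Matrix.trace_mul_comm _ _
        rw [hz, map_mul, h1]
        congr 1
        simp
      exact Complex.conj_eq_iff_re.mp htr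
  have hev : ∀ (x y : Fin n) (i j : Fin m),
      Continuous fun p : Fin n → Fin n → Fin m → Fin m → ℝ => p x y i j := fun x y i j =>
    (continuous_apply j).comp ((continuous_apply i).comp
      ((continuous_apply y).comp (continuous_apply x)))
  have hcorrclosed : IsClosed {p : Fin n → Fin n → Fin m → Fin m → ℝ | IsCorrelation p} := by
    have : {p : Fin n → Fin n → Fin m → Fin m → ℝ | IsCorrelation p} =
        (⋂ x, ⋂ y, ⋂ i, ⋂ j, {p : Fin n → Fin n → Fin m → Fin m → ℝ | 0 ≤ p x y i j}) ∩
        (⋂ x, ⋂ y, {p : Fin n → Fin n → Fin m → Fin m → ℝ | (∑ i, ∑ j, p x y i j) = 1}) := by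
      ext p
      simp only [Set.mem_setOf_eq, Set.mem_inter_iff, Set.mem_iInter, IsCorrelation]
    rw [this]
    refine IsClosed.inter ?_ ?_
    · exact isClosed_iInter fun x => isClosed_iInter fun y => isClosed_iInter fun i =>
        isClosed_iInter fun j => isClosed_le continuous_const (hev x y i j)
    · exact isClosed_iInter fun x => isClosed_iInter fun y =>
        isClosed_eq (continuous_finset_sum _ fun i _ => continuous_finset_sum _ fun j _ =>
          hev x y i j) continuous_const
  have hsyncclosed : IsClosed {p : Fin n → Fin n → Fin m → Fin m → ℝ | Synchronous p} := by
    have : {p : Fin n → Fin n → Fin m → Fin m → ℝ | Synchronous p} =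
        ⋂ x, ⋂ i, ⋂ j, ⋂ (_ : i ≠ j), {p : Fin n → Fin n → Fin m → Fin m → ℝ | p x x i j = 0} := by
      ext p
      simp only [Set.mem_setOf_eq, Set.mem_iInter, Synchronous]
    rw [this]
    exact isClosed_iInter fun x => isClosed_iInter fun i => isClosed_iInter fun j =>
      isClosed_iInter fun _ => isClosed_eq (hev x x i j) continuous_const
  rw [hSeq]
  have hScpt : IsCompact ((φ '' (T ×ˢ T)) ∩
      ({p : Fin n → Fin n → Fin m → Fin m → ℝ | IsCorrelation p} ∩
        {p : Fin n → Fin n → Fin m → Fin m → ℝ | Synchronous p})) :=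
    ((hTcpt.prod hTcpt).image hφc).inter_right (hcorrclosed.inter hsyncclosed)
  exact (isCompact_convexHull_of_isCompact hScpt).isClosed
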